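/- Fix real parameters α, γ, δ, ε > 0. The function g defined for β ∈ (1/ε, ∞) by g(β) = (∑_{n=1}^∞ (n+1)^{-β} e^{-n·P₃₄(β)})·(ζ(εβ) - 1)/(1 + e^{δβ})² is strictly decreasing on (1/ε, ∞), tends to +∞ as β decreases to 1/ε, and tends to 0 as β → +∞. Consequently there exists a unique β₁ ∈ (1/ε, ∞) with g(β₁) = 1; in particular ε·β₁ > 1. (Lemma 1 of the paper defining the transition parameter β₁, together with the Remark that εβ₁ > 1.) -/

import Mathlib

open Filter

/-- `P₃₄(β) = γβ + log(1 + e^{δβ})`. -/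
noncomputable def P34 (γ δ β : ℝ) : ℝ := γ * β + Real.log (1 + Real.exp (δ * β))

/-- Real Riemann zeta: `ζ(s) = ∑_{m=1}^∞ m^{-s}` (indexed by `n : ℕ` via `m = n+1`). -/
noncomputable def zetaR (s : ℝ) : ℝ := ∑' n : ℕ, ((n : ℝ) + 1) ^ (-s)

/-- `Σ₂(Z,β) = ∑_{n=1}^∞ (n+1)^{-β} e^{-nZ}` (indexed by `n : ℕ` via `n ↦ n+1`). -/
noncomputable def S2 (β Z : ℝ) : ℝ :=
  ∑' n : ℕ, ((n : ℝ) + 2) ^ (-β) * Real.exp (-((n : ℝ) + 1) * Z)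

/-- `g(β) = Σ₂(P₃₄(β),β) · (ζ(εβ) - 1) / (1 + e^{δβ})²`. -/
noncomputable def g (γ δ ε β : ℝ) : ℝ :=
  S2 β (P34 γ δ β) * (zetaR (ε * β) - 1) / (1 + Real.exp (δ * β)) ^ 2

/-! ### Auxiliary definitions and lemmas -/

/-- The tail zeta sum `∑_{n≥0} (n+2)^{-s} = ζ(s) - 1`. -/
noncomputable def Wt (s : ℝ) : ℝ := ∑' n : ℕ, ((n : ℝ) + 2) ^ (-s)

lemma summable_W {s : ℝ} (hs : 1 < s) : Summable (fun n : ℕ => ((n:ℝ)+2)^(-s)) := by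
  have h := (summable_nat_add_iff 2).2 (Real.summable_one_div_nat_rpow.2 hs)
  refine h.congr fun n => ?_
  push_cast
  rw [Real.rpow_neg (by positivity), one_div]

lemma summable_zeta {s : ℝ} (hs : 1 < s) : Summable (fun n : ℕ => ((n:ℝ)+1)^(-s)) := by
  have h := (summable_nat_add_iff 1).2 (Real.summable_one_div_nat_rpow.2 hs)
  refine h.congr fun n => ?_
  push_cast
  rw [Real.rpow_neg (by positivity), one_div]

lemma zetaR_sub_one {s : ℝ} (hs : 1 < s) : zetaR s - 1 = Wt s := by
  have h := Summable.tsum_eq_zero_add (summable_zeta hs)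
  unfold zetaR Wt
  rw [h]
  norm_num
  apply tsum_congr
  intro n
  push_cast
  ring_nf

lemma exp_pow (n : ℕ) (Z : ℝ) : Real.exp (-((n:ℝ)+1) * Z) = Real.exp (-Z) ^ (n+1) := by
  rw [← Real.exp_nat_mul]
  push_cast
  ring_nf

lemma summable_S2terms {β Z : ℝ} (hβ : 0 ≤ β) (hZ : 0 < Z) :
    Summable (fun n : ℕ => ((n:ℝ)+2)^(-β) * Real.exp (-((n:ℝ)+1) * Z)) := by
  set r := Real.exp (-Z) with hr
  have hr0 : 0 < r := Real.exp_pos _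
  have hr1 : r < 1 := Real.exp_lt_one_iff.2 (by linarith)
  refine Summable.of_nonneg_of_le (fun n => by positivity) (fun n => ?_)
    (summable_geometric_of_lt_one hr0.le hr1)
  rw [exp_pow]
  calc ((n:ℝ)+2)^(-β) * r ^ (n+1) ≤ 1 * r ^ (n+1) := by
        apply mul_le_mul_of_nonneg_right _ (by positivity)
        exact Real.rpow_le_one_of_one_le_of_nonpos
          (by have := Nat.cast_nonneg (α := ℝ) n; linarith) (by linarith)
    _ = r ^ (n+1) := one_mul _
    _ ≤ r ^ n := pow_le_pow_of_le_one hr0.le hr1.le (Nat.le_succ n)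

lemma P34_pos {γ δ β : ℝ} (hγ : 0 < γ) (hβ : 0 < β) : 0 < P34 γ δ β := by
  unfold P34
  have : 0 < Real.log (1 + Real.exp (δ * β)) :=
    Real.log_pos (by linarith [Real.exp_pos (δ * β)])
  nlinarith

lemma P34_mono {γ δ : ℝ} (hγ : 0 < γ) (hδ : 0 < δ) : StrictMono (P34 γ δ) := by
  intro a b hab
  unfold P34
  have h1 : γ * a < γ * b := by nlinarith
  have h2 : Real.log (1 + Real.exp (δ * a)) ≤ Real.log (1 + Real.exp (δ * b)) := by
    apply Real.log_le_log (by positivity)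
    have : Real.exp (δ * a) ≤ Real.exp (δ * b) := Real.exp_le_exp.2 (by nlinarith)
    linarith
  linarith

lemma P34_ge_log2 {γ δ β : ℝ} (hγ : 0 < γ) (hδ : 0 < δ) (hβ : 0 ≤ β) :
    Real.log 2 ≤ P34 γ δ β := by
  unfold P34
  have h1 : Real.log 2 ≤ Real.log (1 + Real.exp (δ * β)) := by
    apply Real.log_le_log (by norm_num)
    have : (1:ℝ) ≤ Real.exp (δ * β) := Real.one_le_exp (by positivity)
    linarith
  nlinarith

lemma S2_pos {β Z : ℝ} (hβ : 0 ≤ β) (hZ : 0 < Z) : 0 < S2 β Z :=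
  Summable.tsum_pos (summable_S2terms hβ hZ) (fun n => by positivity) 0 (by positivity)

lemma S2_nonneg (β Z : ℝ) : 0 ≤ S2 β Z := tsum_nonneg (fun n => by positivity)

lemma Wt_pos {s : ℝ} (hs : 1 < s) : 0 < Wt s :=
  Summable.tsum_pos (summable_W hs) (fun n => by positivity) 0 (by positivity)

lemma Wt_nonneg (s : ℝ) : 0 ≤ Wt s := tsum_nonneg (fun n => by positivity)

lemma S2_le_one {β Z : ℝ} (hβ : 0 ≤ β) (hZ : Real.log 2 ≤ Z) : S2 β Z ≤ 1 := by
  have hZ0 : 0 < Z := lt_of_lt_of_le (Real.log_pos one_lt_two) hZ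
  have hhalf : Real.exp (-Z) ≤ 1/2 := by
    calc Real.exp (-Z) ≤ Real.exp (-Real.log 2) := Real.exp_le_exp.2 (by linarith)
      _ = 1/2 := by rw [Real.exp_neg, Real.exp_log two_pos]; norm_num
  have hsum : Summable (fun n : ℕ => (1/2:ℝ)^(n+1)) :=
    (summable_nat_add_iff 1).2 (summable_geometric_of_lt_one (by norm_num) (by norm_num))
  have h1 : S2 β Z ≤ ∑' n : ℕ, (1/2:ℝ)^(n+1) := by
    apply Summable.tsum_le_tsum _ (summable_S2terms hβ hZ0) hsum
    intro n
    rw [exp_pow]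
    calc ((n:ℝ)+2)^(-β) * Real.exp (-Z) ^ (n+1) ≤ 1 * (1/2:ℝ)^(n+1) := by
          apply mul_le_mul
          · exact Real.rpow_le_one_of_one_le_of_nonpos
              (by have := Nat.cast_nonneg (α := ℝ) n; linarith) (by linarith)
          · exact pow_le_pow_left₀ (Real.exp_pos _).le hhalf _
          · positivity
          · norm_num
      _ = (1/2:ℝ)^(n+1) := one_mul _
  have h2 : ∑' n : ℕ, (1/2:ℝ)^(n+1) = 1 := by
    have : (fun n : ℕ => (1/2:ℝ)^(n+1)) = fun n : ℕ => (1/2:ℝ)^n * (1/2) := by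
      funext n; rw [pow_succ]
    rw [this, tsum_mul_right, tsum_geometric_of_lt_one (by norm_num) (by norm_num)]
    norm_num
  linarith

lemma continuous_P34 (γ δ : ℝ) : Continuous (P34 γ δ) := by
  unfold P34
  apply Continuous.add (by fun_prop)
  exact ((continuous_const.add (Real.continuous_exp.comp (by fun_prop))).log
    (fun x => (by positivity : (0:ℝ) < 1 + Real.exp (δ*x)).ne'))

lemma continuous_rpow_base {c : ℝ} (hc : 0 < c) {f : ℝ → ℝ} (hf : Continuous f) :
    Continuous (fun x => c ^ (f x)) := by
  have : (fun x => c ^ (f x)) = fun x => Real.exp (Real.log c * f x) := by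
    funext x; rw [Real.rpow_def_of_pos hc]
  rw [this]; fun_prop

lemma contOn_S2 {γ δ a : ℝ} (hγ : 0 < γ) (hδ : 0 < δ) (ha : 0 < a) :
    ContinuousOn (fun β => S2 β (P34 γ δ β)) (Set.Ici a) := by
  unfold S2
  set r := Real.exp (-P34 γ δ a) with hr
  have hr0 : 0 < r := Real.exp_pos _
  have hr1 : r < 1 := Real.exp_lt_one_iff.2 (by linarith [P34_pos (δ := δ) hγ ha])
  apply continuousOn_tsum (u := fun n : ℕ => r ^ (n+1))
  · intro n
    exact (Continuous.mul (continuous_rpow_base (by positivity) continuous_neg)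
      (Real.continuous_exp.comp (by
        have := continuous_P34 γ δ; fun_prop))).continuousOn
  · exact (summable_nat_add_iff 1).2 (summable_geometric_of_lt_one hr0.le hr1)
  · intro n β hβ
    have hβa : a ≤ β := hβ
    have hnn : (0:ℝ) ≤ ((n:ℝ)+2)^(-β) * Real.exp (-((n:ℝ)+1) * P34 γ δ β) := by positivity
    rw [Real.norm_eq_abs, abs_of_nonneg hnn, exp_pow]
    calc ((n:ℝ)+2)^(-β) * Real.exp (-(P34 γ δ β)) ^ (n+1)
        ≤ 1 * r ^ (n+1) := by
          apply mul_le_mul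
          · exact Real.rpow_le_one_of_one_le_of_nonpos
              (by have := Nat.cast_nonneg (α := ℝ) n; linarith) (by linarith)
          · apply pow_le_pow_left₀ (Real.exp_pos _).le
            apply Real.exp_le_exp.2
            have : P34 γ δ a ≤ P34 γ δ β := (P34_mono hγ hδ).monotone hβa
            linarith
          · positivity
          · norm_num
      _ = r ^ (n+1) := one_mul _

lemma contOn_Wt {ε a : ℝ} (hε : 0 < ε) (ha : 1 < ε * a) :
    ContinuousOn (fun β => Wt (ε * β)) (Set.Ici a) := by
  unfold Wt
  apply continuousOn_tsum (u := fun n : ℕ => ((n:ℝ)+2) ^ (-(ε*a)))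
  · intro n
    exact (continuous_rpow_base (by positivity) (by fun_prop)).continuousOn
  · exact summable_W ha
  · intro n β hβ
    have hβa : a ≤ β := hβ
    have hnn : (0:ℝ) ≤ ((n:ℝ)+2)^(-(ε*β)) := by positivity
    rw [Real.norm_eq_abs, abs_of_nonneg hnn]
    apply Real.rpow_le_rpow_of_exponent_le (by have := Nat.cast_nonneg (α := ℝ) n; linarith)
    nlinarith

lemma Wt_strict {ε a b : ℝ} (hε : 0 < ε) (ha : 1 < ε * a) (hab : a < b) :
    Wt (ε * b) < Wt (ε * a) := by
  have hb : 1 < ε * b := by nlinarith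
  apply Summable.tsum_lt_tsum (i := 0) _ _ (summable_W hb) (summable_W ha)
  · intro n
    apply Real.rpow_le_rpow_of_exponent_le (by have := Nat.cast_nonneg (α := ℝ) n; linarith)
    nlinarith
  · have h2 : (1:ℝ) < ((0:ℕ):ℝ) + 2 := by norm_num
    exact (Real.rpow_lt_rpow_left_iff h2).2 (by nlinarith)

lemma S2_strict {γ δ a b : ℝ} (hγ : 0 < γ) (hδ : 0 < δ) (ha : 0 < a) (hab : a < b) :
    S2 b (P34 γ δ b) < S2 a (P34 γ δ a) := by
  have hZa : 0 < P34 γ δ a := P34_pos hγ ha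
  have hZb : 0 < P34 γ δ b := P34_pos hγ (lt_trans ha hab)
  have hZ : P34 γ δ a < P34 γ δ b := P34_mono hγ hδ hab
  apply Summable.tsum_lt_tsum (i := 0) _ _ (summable_S2terms (by linarith) hZb)
    (summable_S2terms ha.le hZa)
  · intro n
    apply mul_le_mul
    · exact Real.rpow_le_rpow_of_exponent_le
        (by have := Nat.cast_nonneg (α := ℝ) n; linarith) (by linarith)
    · exact Real.exp_le_exp.2 (by nlinarith [Nat.cast_nonneg (α := ℝ) n])
    · positivity
    · positivity
  · apply mul_lt_mul''
    · have h2 : (1:ℝ) < ((0:ℕ):ℝ) + 2 := by norm_num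
      exact (Real.rpow_lt_rpow_left_iff h2).2 (by linarith)
    · exact Real.exp_lt_exp.2 (by nlinarith)
    · positivity
    · positivity

lemma tendsto_Wt_left {ε : ℝ} (hε : 0 < ε) :
    Tendsto (fun β => Wt (ε * β)) (nhdsWithin (1/ε) (Set.Ioi (1/ε))) atTop := by
  rw [tendsto_atTop]
  intro M
  obtain ⟨N₀, hN₀⟩ := (tendsto_atTop.1 Real.tendsto_sum_range_one_div_nat_succ_atTop (M+2)).exists
  have key : M + 1 ≤ ∑ i ∈ Finset.range N₀, (1 / ((i:ℝ) + 2)) := by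
    have h := Finset.sum_range_succ' (fun i => 1 / ((i:ℝ) + 1)) N₀
    have hmono : ∑ i ∈ Finset.range N₀, (1 / ((i:ℝ)+1)) ≤
        ∑ i ∈ Finset.range (N₀+1), (1 / ((i:ℝ)+1)) := by
      rw [Finset.sum_range_succ]
      have : (0:ℝ) ≤ 1 / ((N₀:ℝ)+1) := by positivity
      linarith
    have h2 : ∑ i ∈ Finset.range (N₀+1), (1 / ((i:ℝ)+1))
        = ∑ i ∈ Finset.range N₀, (1 / ((i:ℝ)+2)) + 1 := by
      rw [h]; norm_num; apply Finset.sum_congr rfl; intro i _; push_cast; ring_nf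
    have := hN₀
    linarith
  set G : ℝ → ℝ := fun s => ∑ i ∈ Finset.range N₀, ((i:ℝ)+2) ^ (-s) with hG
  have hGcont : Continuous G := by
    apply continuous_finset_sum
    intro i _
    exact continuous_rpow_base (by positivity) continuous_neg
  have hG1 : M + 1 ≤ G 1 := by
    rw [hG]
    simp only []
    calc M + 1 ≤ ∑ i ∈ Finset.range N₀, (1 / ((i:ℝ) + 2)) := key
      _ = ∑ i ∈ Finset.range N₀, ((i:ℝ)+2) ^ (-(1:ℝ)) := by
          apply Finset.sum_congr rfl; intro i _
          rw [Real.rpow_neg_one, one_div]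
  have hGev : ∀ᶠ s in nhds (1:ℝ), M < G s :=
    (hGcont.continuousAt).eventually (eventually_gt_nhds (by linarith))
  have hmul : Tendsto (fun β : ℝ => ε * β) (nhdsWithin (1/ε) (Set.Ioi (1/ε))) (nhds 1) := by
    have h1 : Tendsto (fun β : ℝ => ε * β) (nhds (1/ε)) (nhds (ε * (1/ε))) :=
      (continuous_const.mul continuous_id).continuousAt
    rw [mul_one_div_cancel hε.ne'] at h1
    exact h1.mono_left nhdsWithin_le_nhds
  have hev1 : ∀ᶠ β in nhdsWithin (1/ε) (Set.Ioi (1/ε)), M < G (ε * β) := hmul.eventually hGev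
  have hev2 : ∀ᶠ β in nhdsWithin (1/ε) (Set.Ioi (1/ε)), β ∈ Set.Ioi (1/ε) :=
    self_mem_nhdsWithin
  filter_upwards [hev1, hev2] with β h1 h2
  have hεβ : 1 < ε * β := by
    have : 1/ε < β := h2
    rw [div_lt_iff₀ hε] at this
    linarith [this]
  have hle : G (ε * β) ≤ Wt (ε * β) := by
    apply Summable.sum_le_tsum _ (fun i _ => by positivity) (summable_W hεβ)
  linarith

lemma tendsto_Wt_right {ε : ℝ} (hε : 0 < ε) :
    Tendsto (fun β => Wt (ε * β)) atTop (nhds 0) := by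
  set c₀ : ℝ := 1 + ε with hc₀
  have hc₀1 : 1 < c₀ := by linarith
  set b₀ : ℝ := c₀ / ε with hb₀
  have hbound : ∀ β ≥ b₀, Wt (ε * β) ≤ Wt c₀ * (2:ℝ) ^ (-(ε * β - c₀)) := by
    intro β hβ
    have ht : 0 ≤ ε * β - c₀ := by
      rw [hb₀] at hβ
      have := (div_le_iff₀ hε).1 hβ
      nlinarith
    have hεβ : 1 < ε * β := by linarith
    have h1 : Wt (ε * β) ≤ ∑' n : ℕ, ((n:ℝ)+2) ^ (-c₀) * (2:ℝ) ^ (-(ε * β - c₀)) := by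
      apply Summable.tsum_le_tsum _ (summable_W hεβ) ((summable_W hc₀1).mul_right _)
      intro n
      have hx2 : (2:ℝ) ≤ (n:ℝ) + 2 := by have := Nat.cast_nonneg (α := ℝ) n; linarith
      have hx0 : (0:ℝ) < (n:ℝ) + 2 := by linarith
      have heq : ((n:ℝ)+2) ^ (-(ε*β)) = ((n:ℝ)+2) ^ (-c₀) * ((n:ℝ)+2) ^ (-(ε*β - c₀)) := by
        rw [← Real.rpow_add hx0]; ring_nf
      rw [heq]
      apply mul_le_mul_of_nonneg_left _ (by positivity)
      rw [Real.rpow_neg hx0.le, Real.rpow_neg (by norm_num : (0:ℝ) ≤ 2)]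
      apply inv_anti₀ (by positivity)
      exact Real.rpow_le_rpow (by norm_num) hx2 ht
    rw [tsum_mul_right] at h1
    exact h1
  have hB : Tendsto (fun β => Wt c₀ * (2:ℝ) ^ (-(ε * β - c₀))) atTop (nhds 0) := by
    have h1 : Tendsto (fun β : ℝ => -(ε * β - c₀)) atTop atBot := by
      have ha : Tendsto (fun β : ℝ => -ε * β) atTop atBot :=
        (tendsto_id (α := ℝ)).const_mul_atTop_of_neg (by linarith)
      have := tendsto_atBot_add_const_right atTop c₀ ha
      exact this.congr (fun x => by ring)
    have h2 := (tendsto_rpow_atBot_of_base_gt_one 2 (by norm_num)).comp h1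
    have h3 := h2.const_mul (Wt c₀)
    simpa using h3
  exact squeeze_zero' (Eventually.of_forall (fun β => Wt_nonneg _))
    (eventually_atTop.2 ⟨b₀, hbound⟩) hB

/-- Lemma 1 (definition of `β₁`). -/
theorem stmt_3 (α γ δ ε : ℝ) (hα : 0 < α) (hγ : 0 < γ) (hδ : 0 < δ) (hε : 0 < ε) :
    StrictAntiOn (g γ δ ε) (Set.Ioi (1 / ε)) ∧
    Tendsto (g γ δ ε) (nhdsWithin (1 / ε) (Set.Ioi (1 / ε))) atTop ∧
    Tendsto (g γ δ ε) atTop (nhds 0) ∧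
    (∃! β₁, β₁ ∈ Set.Ioi (1 / ε) ∧ g γ δ ε β₁ = 1) ∧
    (∀ β₁, β₁ ∈ Set.Ioi (1 / ε) → g γ δ ε β₁ = 1 → 1 < ε * β₁) := by
  have hβ₀pos : 0 < 1/ε := by positivity
  -- basic facts for β in the region
  have hreg : ∀ β : ℝ, 1/ε < β → 0 < β ∧ 1 < ε * β := by
    intro β hβ
    have h1 : 0 < β := lt_trans hβ₀pos hβ
    have h2 : 1 < ε * β := by rw [div_lt_iff₀ hε] at hβ; linarith
    exact ⟨h1, h2⟩
  have g_eq : ∀ β : ℝ, 1 < ε * β →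
      g γ δ ε β = S2 β (P34 γ δ β) * Wt (ε * β) / (1 + Real.exp (δ * β)) ^ 2 := by
    intro β hβ
    unfold g
    rw [zetaR_sub_one hβ]
  have hDpos : ∀ β : ℝ, 0 < (1 + Real.exp (δ * β)) ^ 2 := fun β => by positivity
  -- strict antitonicity
  have hanti : StrictAntiOn (g γ δ ε) (Set.Ioi (1 / ε)) := by
    intro a ha b hb hab
    obtain ⟨ha0, hεa⟩ := hreg a ha
    obtain ⟨hb0, hεb⟩ := hreg b hb
    rw [g_eq a hεa, g_eq b hεb]
    have hS : S2 b (P34 γ δ b) < S2 a (P34 γ δ a) := S2_strict hγ hδ ha0 hab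
    have hW : Wt (ε * b) < Wt (ε * a) := Wt_strict hε hεa hab
    have hSb : 0 ≤ S2 b (P34 γ δ b) := S2_nonneg _ _
    have hWb : 0 ≤ Wt (ε * b) := Wt_nonneg _
    have hnum : S2 b (P34 γ δ b) * Wt (ε * b) < S2 a (P34 γ δ a) * Wt (ε * a) :=
      mul_lt_mul'' hS hW hSb hWb
    have hD : (1 + Real.exp (δ * a)) ^ 2 ≤ (1 + Real.exp (δ * b)) ^ 2 := by
      have : Real.exp (δ * a) ≤ Real.exp (δ * b) := Real.exp_le_exp.2 (by nlinarith)
      nlinarith [Real.exp_pos (δ * a), Real.exp_pos (δ * b)]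
    calc S2 b (P34 γ δ b) * Wt (ε * b) / (1 + Real.exp (δ * b)) ^ 2
        ≤ S2 b (P34 γ δ b) * Wt (ε * b) / (1 + Real.exp (δ * a)) ^ 2 := by
          apply div_le_div_of_nonneg_left (by positivity) (hDpos a) hD
      _ < S2 a (P34 γ δ a) * Wt (ε * a) / (1 + Real.exp (δ * a)) ^ 2 := by
          apply div_lt_div_of_pos_right hnum (hDpos a)
  -- continuity at every point of the open region
  have hcontAt : ∀ x : ℝ, 1/ε < x → ContinuousAt (g γ δ ε) x := by
    intro x hx
    set a : ℝ := (1/ε + x)/2 with hadef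
    have ha1 : 1/ε < a := by rw [hadef]; linarith
    have hax : a < x := by rw [hadef]; linarith
    obtain ⟨ha0, hεa⟩ := hreg a ha1
    have hCO : ContinuousOn (g γ δ ε) (Set.Ici a) := by
      have hD : ContinuousOn (fun β => (1 + Real.exp (δ * β)) ^ 2) (Set.Ici a) :=
        (by fun_prop : Continuous (fun β : ℝ => (1 + Real.exp (δ * β)) ^ 2)).continuousOn
      have h1 : ContinuousOn
          (fun β => S2 β (P34 γ δ β) * Wt (ε * β) / (1 + Real.exp (δ * β)) ^ 2)
          (Set.Ici a) :=
        ((contOn_S2 hγ hδ ha0).mul (contOn_Wt hε hεa)).div hD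
          (fun β _ => (hDpos β).ne')
      apply h1.congr
      intro β hβ
      have hβa : a ≤ β := hβ
      have hεβ : 1 < ε * β := by nlinarith
      exact g_eq β hεβ
    exact hCO.continuousAt (Ici_mem_nhds hax)
  -- tendsto at the left endpoint
  have hleft : Tendsto (g γ δ ε) (nhdsWithin (1 / ε) (Set.Ioi (1 / ε))) atTop := by
    set h : ℝ → ℝ := fun β =>
      (2:ℝ) ^ (-β) * Real.exp (-(P34 γ δ β)) / (1 + Real.exp (δ * β)) ^ 2 with hhdef
    have hhcont : Continuous h := by
      rw [hhdef]
      apply Continuous.div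
      · exact (continuous_rpow_base (by norm_num) continuous_neg).mul
          (Real.continuous_exp.comp (continuous_P34 γ δ).neg)
      · fun_prop
      · exact fun β => (hDpos β).ne'
    have hhpos : 0 < h (1/ε) := by
      rw [hhdef]
      have := Real.exp_pos (-(P34 γ δ (1/ε)))
      have := hDpos (1/ε)
      positivity
    set c : ℝ := h (1/ε) / 2 with hcdef
    have hcpos : 0 < c := by rw [hcdef]; linarith
    have hev1 : ∀ᶠ β in nhdsWithin (1/ε) (Set.Ioi (1/ε)), c < h β :=
      ((hhcont.continuousAt).eventually (eventually_gt_nhds (by rw [hcdef]; linarith))).filter_mono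
        nhdsWithin_le_nhds
    have hev2 : ∀ᶠ β in nhdsWithin (1/ε) (Set.Ioi (1/ε)), β ∈ Set.Ioi (1/ε) :=
      self_mem_nhdsWithin
    have hlow : ∀ᶠ β in nhdsWithin (1/ε) (Set.Ioi (1/ε)), c * Wt (ε * β) ≤ g γ δ ε β := by
      filter_upwards [hev1, hev2] with β h1 h2
      obtain ⟨hβ0, hεβ⟩ := hreg β h2
      have hZ : 0 < P34 γ δ β := P34_pos hγ hβ0
      have hterm : (2:ℝ) ^ (-β) * Real.exp (-(P34 γ δ β)) ≤ S2 β (P34 γ δ β) := by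
        have := Summable.le_tsum (summable_S2terms hβ0.le hZ) 0 (fun j _ => by positivity)
        calc (2:ℝ) ^ (-β) * Real.exp (-(P34 γ δ β))
            = (((0:ℕ):ℝ)+2) ^ (-β) * Real.exp (-(((0:ℕ):ℝ)+1) * P34 γ δ β) := by norm_num
          _ ≤ S2 β (P34 γ δ β) := this
      have hWnn : 0 ≤ Wt (ε * β) := Wt_nonneg _
      rw [g_eq β hεβ]
      have hD := hDpos β
      calc c * Wt (ε * β) ≤ h β * Wt (ε * β) := by nlinarith
        _ = (2:ℝ) ^ (-β) * Real.exp (-(P34 γ δ β)) * Wt (ε * β)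
            / (1 + Real.exp (δ * β)) ^ 2 := by rw [hhdef]; ring
        _ ≤ S2 β (P34 γ δ β) * Wt (ε * β) / (1 + Real.exp (δ * β)) ^ 2 := by
            exact (div_le_div_iff_of_pos_right hD).2 (mul_le_mul_of_nonneg_right hterm hWnn)
    have hWtop : Tendsto (fun β => c * Wt (ε * β)) (nhdsWithin (1/ε) (Set.Ioi (1/ε))) atTop :=
      (tendsto_Wt_left hε).const_mul_atTop hcpos
    exact tendsto_atTop_mono' _ hlow hWtop
  -- tendsto 0 at infinity
  have hright : Tendsto (g γ δ ε) atTop (nhds 0) := by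
    have hev : ∀ᶠ β in atTop, β ≥ 1/ε + 1 := eventually_ge_atTop _
    have hub : ∀ᶠ β in atTop, g γ δ ε β ≤ Wt (ε * β) := by
      filter_upwards [hev] with β hβ
      have hβ1 : 1/ε < β := by linarith
      obtain ⟨hβ0, hεβ⟩ := hreg β hβ1
      rw [g_eq β hεβ]
      have hS1 : S2 β (P34 γ δ β) ≤ 1 := S2_le_one hβ0.le (P34_ge_log2 hγ hδ hβ0.le)
      have hD1 : 1 ≤ (1 + Real.exp (δ * β)) ^ 2 := by
        nlinarith [Real.exp_pos (δ * β)]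
      have hWnn : 0 ≤ Wt (ε * β) := Wt_nonneg _
      have hSnn : 0 ≤ S2 β (P34 γ δ β) := S2_nonneg _ _
      calc S2 β (P34 γ δ β) * Wt (ε * β) / (1 + Real.exp (δ * β)) ^ 2
          ≤ S2 β (P34 γ δ β) * Wt (ε * β) := by
            apply div_le_self (by positivity) hD1
        _ ≤ 1 * Wt (ε * β) := mul_le_mul_of_nonneg_right hS1 hWnn
        _ = Wt (ε * β) := one_mul _
    have hlb : ∀ᶠ β in atTop, 0 ≤ g γ δ ε β := by
      filter_upwards [hev] with β hβ
      have hβ1 : 1/ε < β := by linarith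
      obtain ⟨hβ0, hεβ⟩ := hreg β hβ1
      rw [g_eq β hεβ]
      have := S2_nonneg β (P34 γ δ β)
      have := Wt_nonneg (ε * β)
      have := hDpos β
      positivity
    exact squeeze_zero' hlb hub (tendsto_Wt_right hε)
  -- existence and uniqueness
  have hexists : ∃ β₁, β₁ ∈ Set.Ioi (1 / ε) ∧ g γ δ ε β₁ = 1 := by
    -- find a with g a > 1
    have hev1 : ∀ᶠ β in nhdsWithin (1/ε) (Set.Ioi (1/ε)), 1 < g γ δ ε β :=
      hleft.eventually (eventually_gt_atTop 1)
    have hev2 : ∀ᶠ β in nhdsWithin (1/ε) (Set.Ioi (1/ε)), β ∈ Set.Ioi (1/ε) :=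
      self_mem_nhdsWithin
    obtain ⟨a, hga, haI⟩ := (hev1.and hev2).exists
    -- find b > a with g b < 1
    have hev3 : ∀ᶠ β in atTop, g γ δ ε β < 1 :=
      hright.eventually (eventually_lt_nhds (by norm_num : (0:ℝ) < 1))
    have hev4 : ∀ᶠ β in atTop, a < β := eventually_gt_atTop a
    obtain ⟨b, hgb, hab⟩ := (hev3.and hev4).exists
    have hbI : b ∈ Set.Ioi (1/ε) := lt_trans haI hab
    have hcont : ContinuousOn (g γ δ ε) (Set.Icc a b) := by
      apply continuousOn_of_forall_continuousAt
      intro x hx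
      exact hcontAt x (lt_of_lt_of_le haI hx.1)
    have h1mem : (1:ℝ) ∈ Set.Icc (g γ δ ε b) (g γ δ ε a) := ⟨hgb.le, hga.le⟩
    obtain ⟨x, hxI, hgx⟩ := intermediate_value_Icc' hab.le hcont h1mem
    exact ⟨x, lt_of_lt_of_le haI hxI.1, hgx⟩
  obtain ⟨β₁, hβ₁I, hβ₁⟩ := hexists
  refine ⟨hanti, hleft, hright, ⟨β₁, ⟨hβ₁I, hβ₁⟩, ?_⟩, ?_⟩
  · rintro y ⟨hyI, hy⟩
    rcases lt_trichotomy y β₁ with h | h | h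
    · exfalso
      have := hanti hyI hβ₁I h
      rw [hy, hβ₁] at this
      exact lt_irrefl 1 this
    · exact h
    · exfalso
      have := hanti hβ₁I hyI h
      rw [hy, hβ₁] at this
      exact lt_irrefl 1 this
  · intro β hβI _
    exact (hreg β hβI).2
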